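/- Let C be a 5-element cap in (Z/2Z)^n and y the sum of all five elements of C. Then the affine span of C equals the disjoint union qc(C) ∪ {y}, qc(C) has exactly 15 elements, and the affine span of C is a 4-dimensional affine subspace (has 16 elements). -/
import Mathlib

def IsCap {n : ℕ} (S : Set (Fin n → ZMod 2)) : Prop :=
  ∀ a ∈ S, ∀ b ∈ S, ∀ c ∈ S, ∀ d ∈ S,
    a ≠ b → a ≠ c → a ≠ d → b ≠ c → b ≠ d → c ≠ d → a + b + c + d ≠ 0

def excl {n : ℕ} (S : Finset (Fin n → ZMod 2)) : Finset (Fin n → ZMod 2) :=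
  (S.powersetCard 3).image (fun t => t.sum id)

set_option maxHeartbeats 1600000 in
/-- For a 5-element cap `C` with `y` the sum of its five elements:
the affine span of `C` is the disjoint union `qc(C) ∪ {y}`, the quad closure `qc(C)`
has exactly 15 elements, and the affine span is a 4-dimensional flat. -/
theorem five_cap_structure {n : ℕ} (C : Finset (Fin n → ZMod 2))
    (hC : IsCap (C : Set (Fin n → ZMod 2))) (hcard : C.card = 5)
    (y : Fin n → ZMod 2) (hy : y = C.sum id) :
    (affineSpan (ZMod 2) (C : Set (Fin n → ZMod 2)) : Set (Fin n → ZMod 2)) =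
        ((C ∪ excl C : Finset (Fin n → ZMod 2)) : Set (Fin n → ZMod 2)) ∪ {y} ∧
      y ∉ C ∪ excl C ∧
      (C ∪ excl C).card = 15 ∧
      Module.finrank (ZMod 2)
        (affineSpan (ZMod 2) (C : Set (Fin n → ZMod 2))).direction = 4 := by
  classical
  obtain ⟨a, t4, ha4, rfl, h4⟩ := Finset.card_eq_succ.mp (show _ = 4+1 from hcard)
  obtain ⟨b, t3, hb3, rfl, h3⟩ := Finset.card_eq_succ.mp (show _ = 3+1 from h4)
  obtain ⟨c, t2, hc2, rfl, h2s⟩ := Finset.card_eq_succ.mp (show _ = 2+1 from h3)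
  obtain ⟨d, t1, hd1, rfl, h1s⟩ := Finset.card_eq_succ.mp (show _ = 1+1 from h2s)
  obtain ⟨e, rfl⟩ := Finset.card_eq_one.mp h1s
  set C : Finset (Fin n → ZMod 2) := insert a (insert b (insert c (insert d {e})))
    with hCdef
  simp only [hCdef, Finset.mem_insert, Finset.mem_singleton, not_or] at ha4 hb3 hc2 hd1
  obtain ⟨hab, hac, had, hae⟩ := ha4
  obtain ⟨hbc, hbd, hbe⟩ := hb3
  obtain ⟨hcd, hce⟩ := hc2
  have hde : d ≠ e := hd1
  have ha : a ∈ C := by rw [hCdef]; simp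
  have hb : b ∈ C := by rw [hCdef]; simp
  have hc : c ∈ C := by rw [hCdef]; simp
  have hd : d ∈ C := by rw [hCdef]; simp
  have he : e ∈ C := by rw [hCdef]; simp
  have cap4 : ∀ p q r s : Fin n → ZMod 2, p ∈ C → q ∈ C → r ∈ C → s ∈ C →
      p ≠ q → p ≠ r → p ≠ s → q ≠ r → q ≠ s → r ≠ s → p + q + r + s ≠ 0 :=
    fun p q r s hp hq hr hs => hC p (Finset.mem_coe.mpr hp) q (Finset.mem_coe.mpr hq)
      r (Finset.mem_coe.mpr hr) s (Finset.mem_coe.mpr hs)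
  have habcd := cap4 a b c d ha hb hc hd hab hac had hbc hbd hcd
  have habce := cap4 a b c e ha hb hc he hab hac hae hbc hbe hce
  have habde := cap4 a b d e ha hb hd he hab had hae hbd hbe hde
  have hacde := cap4 a c d e ha hc hd he hac had hae hcd hce hde
  have hbcde := cap4 b c d e hb hc hd he hbc hbd hbe hcd hce hde
  have h20 : (2 : Fin n → ZMod 2) = 0 := by
    funext i
    show (2 : ZMod 2) = 0
    decide
  set u : Fin 4 → (Fin n → ZMod 2) := ![a+b, a+c, a+d, a+e] with hu
  have hu0 : u 0 = a + b := rfl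
  have hu1 : u 1 = a + c := rfl
  have hu2 : u 2 = a + d := rfl
  have hu3 : u 3 = a + e := rfl
  -- linear independence
  have hLI : LinearIndependent (ZMod 2) u := by
    rw [Fintype.linearIndependent_iff]
    intro g hg
    rw [Fin.sum_univ_four] at hg
    have h01 : ∀ z : ZMod 2, z = 0 ∨ z = 1 := by decide
    rcases h01 (g 0) with h0|h0 <;> rcases h01 (g 1) with h1|h1 <;>
      rcases h01 (g 2) with h2|h2 <;> rcases h01 (g 3) with h3|h3 <;>
      simp only [h0, h1, h2, h3, hu0, hu1, hu2, hu3, zero_smul, one_smul,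
        add_zero, zero_add] at hg ⊢
    · intro i; fin_cases i <;> simp [h0, h1, h2, h3]
    · exact absurd (show a = e by linear_combination hg - e * h20) hae
    · exact absurd (show a = d by linear_combination hg - d * h20) had
    · exact absurd (show d = e by linear_combination hg - (a+e) * h20) hde
    · exact absurd (show a = c by linear_combination hg - c * h20) hac
    · exact absurd (show c = e by linear_combination hg - (a+e) * h20) hce
    · exact absurd (show c = d by linear_combination hg - (a+d) * h20) hcd
    · exact absurd (show a + c + d + e = 0 by linear_combination hg - a * h20) hacde
    · exact absurd (show a = b by linear_combination hg - b * h20) hab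
    · exact absurd (show b = e by linear_combination hg - (a+e) * h20) hbe
    · exact absurd (show b = d by linear_combination hg - (a+d) * h20) hbd
    · exact absurd (show a + b + d + e = 0 by linear_combination hg - a * h20) habde
    · exact absurd (show b = c by linear_combination hg - (a+c) * h20) hbc
    · exact absurd (show a + b + c + e = 0 by linear_combination hg - a * h20) habce
    · exact absurd (show a + b + c + d = 0 by linear_combination hg - a * h20) habcd
    · exact absurd (show b + c + d + e = 0 by linear_combination hg - 2 * a * h20) hbcde
  set F : (Fin 4 → ZMod 2) → (Fin n → ZMod 2) := fun g => a + ∑ i, g i • u i with hF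
  have hFinj : Function.Injective F := by
    intro g g' hgg
    simp only [hF] at hgg
    have h' : ∑ i, g i • u i = ∑ i, g' i • u i := add_left_cancel hgg
    have hsum : ∑ i, (g i - g' i) • u i = 0 := by
      simp only [sub_smul, Finset.sum_sub_distrib, h', sub_self]
    have hz := Fintype.linearIndependent_iff.mp hLI _ hsum
    funext i
    exact sub_eq_zero.mp (hz i)
  -- evaluations of F
  have hFa : F ![0,0,0,0] = a := by
    simp [hF, Fin.sum_univ_four, hu0, hu1, hu2, hu3]
  have hFb : F ![1,0,0,0] = b := by
    simp only [hF, Fin.sum_univ_four, hu0, hu1, hu2, hu3, Matrix.cons_val_zero,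
      Matrix.cons_val_one, Matrix.head_cons, Matrix.cons_val_two, Matrix.tail_cons,
      Matrix.cons_val_three, zero_smul, one_smul, add_zero, zero_add]
    linear_combination a * h20
  have hFc : F ![0,1,0,0] = c := by
    simp only [hF, Fin.sum_univ_four, hu0, hu1, hu2, hu3, Matrix.cons_val_zero,
      Matrix.cons_val_one, Matrix.head_cons, Matrix.cons_val_two, Matrix.tail_cons,
      Matrix.cons_val_three, zero_smul, one_smul, add_zero, zero_add]
    linear_combination a * h20
  have hFd : F ![0,0,1,0] = d := by
    simp only [hF, Fin.sum_univ_four, hu0, hu1, hu2, hu3, Matrix.cons_val_zero,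
      Matrix.cons_val_one, Matrix.head_cons, Matrix.cons_val_two, Matrix.tail_cons,
      Matrix.cons_val_three, zero_smul, one_smul, add_zero, zero_add]
    linear_combination a * h20
  have hFe : F ![0,0,0,1] = e := by
    simp only [hF, Fin.sum_univ_four, hu0, hu1, hu2, hu3, Matrix.cons_val_zero,
      Matrix.cons_val_one, Matrix.head_cons, Matrix.cons_val_two, Matrix.tail_cons,
      Matrix.cons_val_three, zero_smul, one_smul, add_zero, zero_add]
    linear_combination a * h20
  have hFabc : F ![1,1,0,0] = a + b + c := by
    simp only [hF, Fin.sum_univ_four, hu0, hu1, hu2, hu3, Matrix.cons_val_zero,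
      Matrix.cons_val_one, Matrix.head_cons, Matrix.cons_val_two, Matrix.tail_cons,
      Matrix.cons_val_three, zero_smul, one_smul, add_zero, zero_add]
    linear_combination a * h20
  have hFabd : F ![1,0,1,0] = a + b + d := by
    simp only [hF, Fin.sum_univ_four, hu0, hu1, hu2, hu3, Matrix.cons_val_zero,
      Matrix.cons_val_one, Matrix.head_cons, Matrix.cons_val_two, Matrix.tail_cons,
      Matrix.cons_val_three, zero_smul, one_smul, add_zero, zero_add]
    linear_combination a * h20
  have hFabe : F ![1,0,0,1] = a + b + e := by
    simp only [hF, Fin.sum_univ_four, hu0, hu1, hu2, hu3, Matrix.cons_val_zero,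
      Matrix.cons_val_one, Matrix.head_cons, Matrix.cons_val_two, Matrix.tail_cons,
      Matrix.cons_val_three, zero_smul, one_smul, add_zero, zero_add]
    linear_combination a * h20
  have hFacd : F ![0,1,1,0] = a + c + d := by
    simp only [hF, Fin.sum_univ_four, hu0, hu1, hu2, hu3, Matrix.cons_val_zero,
      Matrix.cons_val_one, Matrix.head_cons, Matrix.cons_val_two, Matrix.tail_cons,
      Matrix.cons_val_three, zero_smul, one_smul, add_zero, zero_add]
    linear_combination a * h20
  have hFace : F ![0,1,0,1] = a + c + e := by
    simp only [hF, Fin.sum_univ_four, hu0, hu1, hu2, hu3, Matrix.cons_val_zero,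
      Matrix.cons_val_one, Matrix.head_cons, Matrix.cons_val_two, Matrix.tail_cons,
      Matrix.cons_val_three, zero_smul, one_smul, add_zero, zero_add]
    linear_combination a * h20
  have hFade : F ![0,0,1,1] = a + d + e := by
    simp only [hF, Fin.sum_univ_four, hu0, hu1, hu2, hu3, Matrix.cons_val_zero,
      Matrix.cons_val_one, Matrix.head_cons, Matrix.cons_val_two, Matrix.tail_cons,
      Matrix.cons_val_three, zero_smul, one_smul, add_zero, zero_add]
    linear_combination a * h20
  have hFcde : F ![0,1,1,1] = c + d + e := by
    simp only [hF, Fin.sum_univ_four, hu0, hu1, hu2, hu3, Matrix.cons_val_zero,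
      Matrix.cons_val_one, Matrix.head_cons, Matrix.cons_val_two, Matrix.tail_cons,
      Matrix.cons_val_three, zero_smul, one_smul, add_zero, zero_add]
    linear_combination 2 * a * h20
  have hFbde : F ![1,0,1,1] = b + d + e := by
    simp only [hF, Fin.sum_univ_four, hu0, hu1, hu2, hu3, Matrix.cons_val_zero,
      Matrix.cons_val_one, Matrix.head_cons, Matrix.cons_val_two, Matrix.tail_cons,
      Matrix.cons_val_three, zero_smul, one_smul, add_zero, zero_add]
    linear_combination 2 * a * h20
  have hFbce : F ![1,1,0,1] = b + c + e := by
    simp only [hF, Fin.sum_univ_four, hu0, hu1, hu2, hu3, Matrix.cons_val_zero,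
      Matrix.cons_val_one, Matrix.head_cons, Matrix.cons_val_two, Matrix.tail_cons,
      Matrix.cons_val_three, zero_smul, one_smul, add_zero, zero_add]
    linear_combination 2 * a * h20
  have hFbcd : F ![1,1,1,0] = b + c + d := by
    simp only [hF, Fin.sum_univ_four, hu0, hu1, hu2, hu3, Matrix.cons_val_zero,
      Matrix.cons_val_one, Matrix.head_cons, Matrix.cons_val_two, Matrix.tail_cons,
      Matrix.cons_val_three, zero_smul, one_smul, add_zero, zero_add]
    linear_combination 2 * a * h20
  have hFy : F ![1,1,1,1] = a + b + c + d + e := by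
    simp only [hF, Fin.sum_univ_four, hu0, hu1, hu2, hu3, Matrix.cons_val_zero,
      Matrix.cons_val_one, Matrix.head_cons, Matrix.cons_val_two, Matrix.tail_cons,
      Matrix.cons_val_three, zero_smul, one_smul, add_zero, zero_add]
    linear_combination 2 * a * h20
  set W01 : Finset (Fin 4 → ZMod 2) :=
    {![0,0,0,0], ![1,0,0,0], ![0,1,0,0], ![0,0,1,0], ![0,0,0,1]} with hW01
  set W23 : Finset (Fin 4 → ZMod 2) :=
    {![1,1,0,0], ![1,0,1,0], ![1,0,0,1], ![0,1,1,0], ![0,1,0,1], ![0,0,1,1],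
     ![0,1,1,1], ![1,0,1,1], ![1,1,0,1], ![1,1,1,0]} with hW23
  -- C = F '' W01
  have hC_eq : C = Finset.image F W01 := by
    refine (Finset.eq_of_subset_of_card_le ?_ ?_).symm
    · intro x hx
      obtain ⟨g, hg, rfl⟩ := Finset.mem_image.mp hx
      rw [hW01] at hg
      simp only [Finset.mem_insert, Finset.mem_singleton] at hg
      rcases hg with rfl|rfl|rfl|rfl|rfl
      · rw [hFa]; exact ha
      · rw [hFb]; exact hb
      · rw [hFc]; exact hc
      · rw [hFd]; exact hd
      · rw [hFe]; exact he
    · rw [Finset.card_image_of_injective _ hFinj, hcard]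
      rw [hW01]; decide
  have hmem_excl : ∀ x y z : Fin n → ZMod 2, x ∈ C → y ∈ C → z ∈ C →
      x ≠ y → x ≠ z → y ≠ z → x + y + z ∈ excl C := by
    intro x y z hx hy hz hxy hxz hyz
    refine Finset.mem_image.mpr ⟨{x, y, z}, Finset.mem_powersetCard.mpr ⟨?_, ?_⟩, ?_⟩
    · exact Finset.insert_subset_iff.mpr ⟨hx, Finset.insert_subset_iff.mpr
        ⟨hy, Finset.singleton_subset_iff.mpr hz⟩⟩
    · rw [Finset.card_insert_of_notMem (by simp [hxy, hxz]),
        Finset.card_insert_of_notMem (by simp [hyz]), Finset.card_singleton]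
    · rw [Finset.sum_insert (by simp [hxy, hxz]), Finset.sum_insert (by simp [hyz]),
        Finset.sum_singleton]
      simp [add_assoc]
  have hexcl_eq : excl C = Finset.image F W23 := by
    refine (Finset.eq_of_subset_of_card_le ?_ ?_).symm
    · intro x hx
      obtain ⟨g, hg, rfl⟩ := Finset.mem_image.mp hx
      rw [hW23] at hg
      simp only [Finset.mem_insert, Finset.mem_singleton] at hg
      rcases hg with rfl|rfl|rfl|rfl|rfl|rfl|rfl|rfl|rfl|rfl
      · rw [hFabc]; exact hmem_excl a b c ha hb hc hab hac hbc
      · rw [hFabd]; exact hmem_excl a b d ha hb hd hab had hbd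
      · rw [hFabe]; exact hmem_excl a b e ha hb he hab hae hbe
      · rw [hFacd]; exact hmem_excl a c d ha hc hd hac had hcd
      · rw [hFace]; exact hmem_excl a c e ha hc he hac hae hce
      · rw [hFade]; exact hmem_excl a d e ha hd he had hae hde
      · rw [hFcde]; exact hmem_excl c d e hc hd he hcd hce hde
      · rw [hFbde]; exact hmem_excl b d e hb hd he hbd hbe hde
      · rw [hFbce]; exact hmem_excl b c e hb hc he hbc hbe hce
      · rw [hFbcd]; exact hmem_excl b c d hb hc hd hbc hbd hcd
    · calc (excl C).card ≤ (C.powersetCard 3).card := Finset.card_image_le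
        _ = 10 := by rw [Finset.card_powersetCard, hcard]; decide
        _ ≤ (Finset.image F W23).card := by
            rw [Finset.card_image_of_injective _ hFinj, hW23]; decide
  have hunion : C ∪ excl C = Finset.image F (W01 ∪ W23) := by
    rw [hexcl_eq, hC_eq, ← Finset.image_union]
  have hcard15 : (C ∪ excl C).card = 15 := by
    rw [hunion, Finset.card_image_of_injective _ hFinj, hW01, hW23]; decide
  have hysum : y = F ![1,1,1,1] := by
    rw [hy, hCdef, Finset.sum_insert (by simp [hab, hac, had, hae]),
      Finset.sum_insert (by simp [hbc, hbd, hbe]), Finset.sum_insert (by simp [hcd, hce]),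
      Finset.sum_insert (by simp [hde]), Finset.sum_singleton, hFy]
    simp [add_assoc]
  have hynotin : y ∉ C ∪ excl C := by
    rw [hunion]
    intro hmem
    obtain ⟨g, hg, hgy⟩ := Finset.mem_image.mp hmem
    obtain rfl := hFinj (hgy.trans hysum)
    rw [hW01, hW23] at hg
    exact absurd hg (by decide)
  -- vector span
  have hvs : vectorSpan (ZMod 2) (C : Set (Fin n → ZMod 2)) =
      Submodule.span (ZMod 2) (Set.range u) := by
    rw [vectorSpan_eq_span_vsub_set_right (ZMod 2) (Finset.mem_coe.mpr ha)]
    have hba : b - a = a + b := by linear_combination (-a) * h20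
    have hca : c - a = a + c := by linear_combination (-a) * h20
    have hda : d - a = a + d := by linear_combination (-a) * h20
    have hea : e - a = a + e := by linear_combination (-a) * h20
    have himg : (· -ᵥ a) '' (C : Set (Fin n → ZMod 2)) = insert 0 (Set.range u) := by
      rw [hCdef]
      simp only [Finset.coe_insert, Finset.coe_singleton, Set.image_insert_eq,
        Set.image_singleton, vsub_eq_sub, sub_self, hba, hca, hda, hea]
      rw [hu]
      simp only [Matrix.range_cons, Matrix.range_empty, Set.union_empty, Set.union_singleton,
        Set.union_insert]
      ext x
      simp only [Set.mem_insert_iff, Set.mem_singleton_iff]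
      constructor <;> rintro (rfl | rfl | rfl | rfl | rfl) <;> simp
    rw [himg, Submodule.span_insert_zero]
  have hdir : (affineSpan (ZMod 2) (C : Set (Fin n → ZMod 2))).direction =
      Submodule.span (ZMod 2) (Set.range u) := by
    rw [direction_affineSpan, hvs]
  have haff : ∀ v, v ∈ affineSpan (ZMod 2) (C : Set (Fin n → ZMod 2)) ↔ ∃ g, F g = v := by
    intro v
    constructor
    · intro hv
      have hva : v -ᵥ a ∈ (affineSpan (ZMod 2) (C : Set (Fin n → ZMod 2))).direction :=
        AffineSubspace.vsub_mem_direction hv (mem_affineSpan _ (Finset.mem_coe.mpr ha))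
      rw [hdir] at hva
      obtain ⟨g, hg⟩ := (Submodule.mem_span_range_iff_exists_fun (ZMod 2)).mp hva
      refine ⟨g, ?_⟩
      simp only [hF]
      rw [hg, vsub_eq_sub]
      ring
    · rintro ⟨g, rfl⟩
      have hsm : (∑ i, g i • u i) ∈
          (affineSpan (ZMod 2) (C : Set (Fin n → ZMod 2))).direction := by
        rw [hdir]
        exact Submodule.sum_mem _ fun i _ =>
          Submodule.smul_mem _ _ (Submodule.subset_span ⟨i, rfl⟩)
      have := AffineSubspace.vadd_mem_of_mem_direction hsm
        (mem_affineSpan (ZMod 2) (Finset.mem_coe.mpr ha))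
      simpa [hF, vadd_eq_add, add_comm] using this
  have hset : (affineSpan (ZMod 2) (C : Set (Fin n → ZMod 2)) : Set (Fin n → ZMod 2)) =
      ((C ∪ excl C : Finset (Fin n → ZMod 2)) : Set (Fin n → ZMod 2)) ∪ {y} := by
    ext v
    simp only [SetLike.mem_coe, Set.mem_union, Set.mem_singleton_iff, Finset.mem_coe]
    rw [haff v]
    constructor
    · rintro ⟨g, rfl⟩
      by_cases hg : g ∈ W01 ∪ W23
      · exact Or.inl (hunion ▸ Finset.mem_image_of_mem F hg)
      · have hall : ∀ h : Fin 4 → ZMod 2, h ∉ W01 ∪ W23 → h = ![1,1,1,1] := by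
          rw [hW01, hW23]; decide
        rw [hall g hg, ← hysum]
        exact Or.inr rfl
    · rintro (hv | rfl)
      · rw [hunion] at hv
        obtain ⟨g, _, rfl⟩ := Finset.mem_image.mp hv
        exact ⟨g, rfl⟩
      · exact ⟨![1,1,1,1], hysum.symm⟩
  have hfr : Module.finrank (ZMod 2)
      (affineSpan (ZMod 2) (C : Set (Fin n → ZMod 2))).direction = 4 := by
    rw [hdir]
    have := finrank_span_eq_card hLI
    simpa using this
  exact ⟨hset, hynotin, hcard15, hfr⟩
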